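/- Let N ≥ 1, q = p̄ = 2+4/N < p < 2*, a, μ > 0 with μ a^{4/N} < p̄/(2C_{N,p̄}^{p̄}). If u ∈ S_a satisfies the Pohozaev constraint P_μ(u) = |∇u|₂² − γ_p|u|_p^p − (2μ/p̄)|u|_{p̄}^{p̄} = 0, then |∇u|₂^{γ_p p − 2} ≥ a^{−(1−γ_p)p}(1 − (2/p̄)C_{N,p̄}^{p̄} μ a^{4/N})/(γ_p C_{N,p}^p) > 0; in particular inf{|∇u|₂ : u ∈ P_{a,μ}} > 0, and E_μ(u) ≥ ½(1 − 2/(γ_p p))(1 − (2/p̄)C_{N,p̄}^{p̄} μ a^{4/N})|∇u|₂², so that m(a,μ) = inf_{P_{a,μ}} E_μ > 0. -/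

import Mathlib

set_option maxHeartbeats 1000000


/-- Lower bounds on the Pohozaev manifold for `q = p̄ = 2+4/N < p < 2*`, `a, μ > 0` with
`μ a^{4/N} < p̄/(2C_{N,p̄}^{p̄})`.  For `u ∈ S_a` write `G = |∇u|₂ ≥ 0`,
`Pp = |u|_p^p ≥ 0`, `Pbar = |u|_{p̄}^{p̄} > 0`; the Gagliardo–Nirenberg inequalities give
`Pp ≤ C_{N,p}^p G^{γ_p p} a^{(1−γ_p)p}` and `Pbar ≤ C_{N,p̄}^{p̄} G² a^{4/N}`.  If the
Pohozaev constraint `G² − γ_p Pp − (2μ/p̄)Pbar = 0` holds, then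
`G^{γ_p p − 2} ≥ a^{−(1−γ_p)p}(1 − (2/p̄)C_{N,p̄}^{p̄}μa^{4/N})/(γ_p C_{N,p}^p) > 0`
(in particular the gradient norms on `P_{a,μ}` are bounded away from `0`) and
`E_μ(u) ≥ ½(1 − 2/(γ_p p))(1 − (2/p̄)C_{N,p̄}^{p̄}μa^{4/N})G²`, so `E_μ(u) > 0`,
whence `m(a,μ) = inf_{P_{a,μ}} E_μ > 0`. -/
theorem stmt13 (N : ℕ) (hN : 1 ≤ N) (a μ p pbar γp Cp Cpbar : ℝ)
    (hpbar : pbar = 2 + 4 / (N : ℝ)) (hγp : γp = (N : ℝ) * (p - 2) / (2 * p))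
    (hp : pbar < p) (hp2s : N ≤ 2 ∨ p < 2 * (N : ℝ) / ((N : ℝ) - 2))
    (ha : 0 < a) (hμ : 0 < μ) (hCp : 0 < Cp) (hCpbar : 0 < Cpbar)
    (hsmall : μ * a ^ ((4 : ℝ) / (N : ℝ)) < pbar / (2 * Cpbar ^ pbar))
    (G Pp Pbar E : ℝ)
    (hG : 0 ≤ G) (hPp : 0 ≤ Pp) (hPbar : 0 < Pbar)
    (hGNp : Pp ≤ Cp ^ p * G ^ (γp * p) * a ^ ((1 - γp) * p))
    (hGNpbar : Pbar ≤ Cpbar ^ pbar * G ^ 2 * a ^ ((4 : ℝ) / (N : ℝ)))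
    (hE : E = G ^ 2 / 2 - Pp / p - μ * Pbar / pbar)
    (hPoh : G ^ 2 - γp * Pp - (2 * μ / pbar) * Pbar = 0) :
    (0 < a ^ (-((1 - γp) * p)) * (1 - (2 / pbar) * Cpbar ^ pbar * μ * a ^ ((4 : ℝ) / (N : ℝ)))
        / (γp * Cp ^ p)) ∧
    a ^ (-((1 - γp) * p)) * (1 - (2 / pbar) * Cpbar ^ pbar * μ * a ^ ((4 : ℝ) / (N : ℝ)))
        / (γp * Cp ^ p) ≤ G ^ (γp * p - 2) ∧
    (1 / 2) * (1 - 2 / (γp * p)) *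
        (1 - (2 / pbar) * Cpbar ^ pbar * μ * a ^ ((4 : ℝ) / (N : ℝ))) * G ^ 2 ≤ E ∧
    0 < E := by
  have hNpos : (0:ℝ) < N := by exact_mod_cast Nat.pos_of_ne_zero (by omega)
  have hpbar2 : (2:ℝ) < pbar := by
    rw [hpbar]; have : 0 < 4 / (N:ℝ) := by positivity
    linarith
  have hp2 : (2:ℝ) < p := by linarith
  have hppos : (0:ℝ) < p := by linarith
  have hγpos : 0 < γp := by
    rw [hγp]; apply div_pos (by nlinarith) (by positivity)
  have hApos : 0 < a ^ ((4:ℝ) / (N:ℝ)) := Real.rpow_pos_of_pos ha _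
  have hCbpos : 0 < Cpbar ^ pbar := Real.rpow_pos_of_pos hCpbar _
  have hCppos : 0 < Cp ^ p := Real.rpow_pos_of_pos hCp _
  have haPos : 0 < a ^ ((1 - γp) * p) := Real.rpow_pos_of_pos ha _
  set A := a ^ ((4:ℝ) / (N:ℝ)) with hA
  set B := (2 / pbar) * Cpbar ^ pbar * μ * A with hB
  have hδ : 0 < 1 - B := by
    have h1 : μ * A * (2 * Cpbar ^ pbar) < pbar := by
      rw [lt_div_iff₀ (by positivity)] at hsmall
      nlinarith
    have h2 : B < 1 := by
      rw [hB, div_mul_eq_mul_div, div_mul_eq_mul_div, div_mul_eq_mul_div,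
        div_lt_one (by linarith)]
      nlinarith
    linarith
  have hγpp : γp * p = (N:ℝ) * (p - 2) / 2 := by
    rw [hγp]; field_simp
  have ht2 : 2 < γp * p := by
    rw [hγpp]
    have h4 : 4 / (N:ℝ) < p - 2 := by
      rw [hpbar] at hp; linarith
    have h5 : 4 < (N:ℝ) * (p - 2) := by
      rw [div_lt_iff₀ hNpos] at h4; nlinarith
    linarith
  have htpos : 0 < γp * p := by linarith
  set X := (2 * μ / pbar) * Pbar with hX
  have hXpos : 0 < X := by
    have : 0 < 2 * μ / pbar := by positivity
    positivity
  have hXle : X ≤ B * G ^ 2 := by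
    have h0 : (0:ℝ) ≤ 2 * μ / pbar := by positivity
    calc X ≤ (2 * μ / pbar) * (Cpbar ^ pbar * G ^ 2 * A) :=
          mul_le_mul_of_nonneg_left hGNpbar h0
      _ = B * G ^ 2 := by rw [hB]; ring
  have hG2pos : 0 < G ^ 2 := by nlinarith [mul_nonneg hγpos.le hPp]
  have hGpos : 0 < G := by
    rcases lt_or_eq_of_le hG with h | h
    · exact h
    · exfalso; rw [← h] at hG2pos; simp at hG2pos
  have hkey : (1 - B) * G ^ 2 ≤ γp * Pp := by nlinarith
  have hkey2 : (1 - B) * G ^ 2 ≤ γp * (Cp ^ p * G ^ (γp * p) * a ^ ((1 - γp) * p)) := by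
    have := mul_le_mul_of_nonneg_left hGNp hγpos.le
    linarith
  have hGsplit : G ^ (γp * p) = G ^ (γp * p - 2) * G ^ 2 := by
    rw [← Real.rpow_two, ← Real.rpow_add hGpos]; ring_nf
  have hGr2pos : 0 < G ^ (γp * p - 2) := Real.rpow_pos_of_pos hGpos _
  have h5 : (1 - B) * G ^ 2
      ≤ (γp * Cp ^ p * a ^ ((1 - γp) * p) * G ^ (γp * p - 2)) * G ^ 2 := by
    calc (1 - B) * G ^ 2 ≤ γp * (Cp ^ p * G ^ (γp * p) * a ^ ((1 - γp) * p)) := hkey2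
      _ = (γp * Cp ^ p * a ^ ((1 - γp) * p) * G ^ (γp * p - 2)) * G ^ 2 := by
          rw [hGsplit]; ring
  have h6 : 1 - B ≤ γp * Cp ^ p * a ^ ((1 - γp) * p) * G ^ (γp * p - 2) :=
    (mul_le_mul_iff_of_pos_right hG2pos).mp h5
  have first : a ^ (-((1 - γp) * p)) * (1 - B) / (γp * Cp ^ p) ≤ G ^ (γp * p - 2) := by
    rw [Real.rpow_neg ha.le, div_le_iff₀ (by positivity), inv_mul_le_iff₀ haPos]
    calc 1 - B ≤ γp * Cp ^ p * a ^ ((1 - γp) * p) * G ^ (γp * p - 2) := h6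
      _ = a ^ ((1 - γp) * p) * (G ^ (γp * p - 2) * (γp * Cp ^ p)) := by ring
  have hpos0 : 0 < a ^ (-((1 - γp) * p)) * (1 - B) / (γp * Cp ^ p) := by
    have h7 : 0 < a ^ (-((1 - γp) * p)) := Real.rpow_pos_of_pos ha _
    positivity
  have hPpval : Pp = (G ^ 2 - X) / γp := by
    rw [eq_div_iff (ne_of_gt hγpos)]; linear_combination -hPoh
  have hEval : E = (1/2 - 1/(γp*p)) * (G ^ 2 - X) := by
    have hμPbar : μ * Pbar / pbar = X / 2 := by
      rw [hX]; field_simp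
    rw [hE, hPpval, hμPbar]
    field_simp
    ring
  have hcoef : 0 < 1/2 - 1/(γp*p) := by
    rw [sub_pos, div_lt_div_iff₀ htpos (by norm_num)]; linarith
  have hEbound : (1/2) * (1 - 2/(γp*p)) * (1 - B) * G ^ 2 ≤ E := by
    rw [hEval]
    have h1 : (1 - B) * G ^ 2 ≤ G ^ 2 - X := by nlinarith
    have h2 : (1/2 - 1/(γp*p)) * ((1 - B) * G ^ 2) ≤ (1/2 - 1/(γp*p)) * (G ^ 2 - X) :=
      mul_le_mul_of_nonneg_left h1 hcoef.le
    have h3 : (1/2) * (1 - 2/(γp*p)) = 1/2 - 1/(γp*p) := by field_simp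
    nlinarith
  have hEpos : 0 < E := by
    have h9 : 0 < 1 - 2/(γp*p) := by
      have e : (2:ℝ)/(γp*p) = 2*(1/(γp*p)) := by ring
      rw [e]; linarith
    have h8 : 0 < (1/2) * (1 - 2/(γp*p)) * (1 - B) * G ^ 2 :=
      mul_pos (mul_pos (mul_pos (by norm_num) h9) hδ) hG2pos
    linarith
  exact ⟨hpos0, first, hEbound, hEpos⟩
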